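/- Let p > 5 be a prime and r, m positive integers. Then the following exact identity of rational numbers holds: Σ_{i1+i2+i3+i4+i5=mp^r, all ij∈𝒫_p} 1/(i1·i2·i3·i4·i5) = (120/(m·p^r)) · Σ_{1 ≤ u1 < u2 < u3 < u4 ≤ mp^r, with u1, u4, u2−u1, u3−u2, u4−u3 ∈ 𝒫_p} 1/(u1·u2·u3·u4), where the first sum is over quintuples of positive integers summing to m·p^r with all entries coprime to p. -/

import Mathlib

open Finset

lemma ici_succ_sum {n : ℕ} (k : Fin n) (f : Fin (n + 1) → ℚ) :
    ∑ j ∈ Finset.Ici k.succ, f j = ∑ j ∈ Finset.Ici k, f j.succ := by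
  have h : Finset.Ici k.succ = (Finset.Ici k).map ⟨Fin.succ, Fin.succ_injective n⟩ := by
    ext a
    simp only [Finset.mem_map, Finset.mem_Ici, Function.Embedding.coeFn_mk]
    constructor
    · intro ha
      rcases Fin.eq_succ_of_ne_zero (ne_of_gt (lt_of_lt_of_le (Fin.succ_pos k) ha)) with ⟨i, rfl⟩
      exact ⟨i, Fin.succ_le_succ_iff.mp ha, rfl⟩
    · rintro ⟨i, hi, rfl⟩
      exact Fin.succ_le_succ_iff.mpr hi
  rw [h, Finset.sum_map]
  rfl

lemma perm_suffix_sum : ∀ (n : ℕ) (x : Fin n → ℚ), (∀ i, 0 < x i) →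
    ∑ σ : Equiv.Perm (Fin n), ∏ k : Fin n, (∑ j ∈ Finset.Ici k, x (σ j))⁻¹ = ∏ i, (x i)⁻¹ := by
  intro n
  induction n with
  | zero => intro x hx; simp
  | succ n IH =>
    intro x hx
    rw [← Equiv.sum_comp (Equiv.Perm.decomposeFin (n := n)).symm, Fintype.sum_prod_type]
    have hIci0 : Finset.Ici (0 : Fin (n + 1)) = Finset.univ := by
      ext a; simp [Fin.zero_le]
    have hxs : (0:ℚ) < ∑ i, x i := Finset.sum_pos (fun i _ => hx i) ⟨0, Finset.mem_univ 0⟩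
    have hxprod : (0:ℚ) < ∏ i, x i := Finset.prod_pos (fun i _ => hx i)
    have key : ∀ p : Fin (n + 1), ∀ τ : Equiv.Perm (Fin n),
        ∏ k : Fin (n + 1), (∑ j ∈ Finset.Ici k, x ((Equiv.Perm.decomposeFin.symm (p, τ)) j))⁻¹
        = (∑ i, x i)⁻¹ * ∏ k : Fin n, (∑ j ∈ Finset.Ici k, (fun i => x (Equiv.swap 0 p i.succ)) (τ j))⁻¹ := by
      intro p τ
      rw [Fin.prod_univ_succ]
      congr 1
      · rw [hIci0, Equiv.sum_comp (Equiv.Perm.decomposeFin.symm (p, τ)) x]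
      · refine Finset.prod_congr rfl fun k _ => ?_
        rw [ici_succ_sum]
        congr 1
        refine Finset.sum_congr rfl fun j _ => ?_
        rw [Equiv.Perm.decomposeFin_symm_apply_succ]
    have prod_y : ∀ p : Fin (n + 1),
        ∏ i : Fin n, x (Equiv.swap 0 p i.succ) = (∏ i, x i) / x p := by
      intro p
      have h := Equiv.prod_comp (Equiv.Perm.decomposeFin.symm (p, 1)) x
      rw [Fin.prod_univ_succ] at h
      simp only [Equiv.Perm.decomposeFin_symm_apply_zero, Equiv.Perm.decomposeFin_symm_apply_succ,
        Equiv.Perm.one_apply] at h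
      rw [eq_div_iff (ne_of_gt (hx p)), mul_comm]
      simpa using h
    have inv_y : ∀ p : Fin (n+1), ∏ i : Fin n, (x (Equiv.swap 0 p i.succ))⁻¹
        = x p * (∏ i, x i)⁻¹ := by
      intro p
      have h1 : ∏ i : Fin n, (x (Equiv.swap 0 p i.succ))⁻¹
          = (∏ i : Fin n, x (Equiv.swap 0 p i.succ))⁻¹ := by
        rw [Finset.prod_inv_distrib]
      rw [h1, prod_y p, inv_div, div_eq_mul_inv]
    calc ∑ p : Fin (n+1), ∑ τ : Equiv.Perm (Fin n),
          ∏ k : Fin (n + 1), (∑ j ∈ Finset.Ici k, x ((Equiv.Perm.decomposeFin.symm (p, τ)) j))⁻¹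
        = ∑ p : Fin (n+1), (∑ i, x i)⁻¹ * ∑ τ : Equiv.Perm (Fin n),
            ∏ k : Fin n, (∑ j ∈ Finset.Ici k, (fun i => x (Equiv.swap 0 p i.succ)) (τ j))⁻¹ := by
          refine Finset.sum_congr rfl fun p _ => ?_
          rw [Finset.mul_sum]
          exact Finset.sum_congr rfl fun τ _ => key p τ
      _ = ∑ p : Fin (n+1), (∑ i, x i)⁻¹ * ∏ i : Fin n, ((fun i => x (Equiv.swap 0 p i.succ)) i)⁻¹ := by
          refine Finset.sum_congr rfl fun p _ => ?_
          rw [IH (fun i => x (Equiv.swap 0 p i.succ)) (fun i => hx _)]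
      _ = ∏ i, (x i)⁻¹ := by
          simp only [inv_y]
          rw [← Finset.mul_sum, ← Finset.sum_mul, ← mul_assoc,
            inv_mul_cancel₀ (ne_of_gt hxs), one_mul, Finset.prod_inv_distrib]


lemma g_unfold (x : Fin 5 → ℚ) : ∏ k : Fin 5, (∑ j ∈ Finset.Ici k, x j)⁻¹ =
    (x 0 + x 1 + x 2 + x 3 + x 4)⁻¹ * (x 1 + x 2 + x 3 + x 4)⁻¹ * (x 2 + x 3 + x 4)⁻¹ *
      (x 3 + x 4)⁻¹ * (x 4)⁻¹ := by
  have h4 : ∑ j ∈ ({4} : Finset (Fin 5)), x j = x 4 := Finset.sum_singleton _ _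
  have h3 : ∑ j ∈ ({3,4} : Finset (Fin 5)), x j = x 3 + x 4 := by
    rw [Finset.sum_insert (by decide), h4]
  have h2 : ∑ j ∈ ({2,3,4} : Finset (Fin 5)), x j = x 2 + (x 3 + x 4) := by
    rw [Finset.sum_insert (by decide), h3]
  have h1 : ∑ j ∈ ({1,2,3,4} : Finset (Fin 5)), x j = x 1 + (x 2 + (x 3 + x 4)) := by
    rw [Finset.sum_insert (by decide), h2]
  have h0 : ∑ j ∈ ({0,1,2,3,4} : Finset (Fin 5)), x j = x 0 + (x 1 + (x 2 + (x 3 + x 4))) := by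
    rw [Finset.sum_insert (by decide), h1]
  rw [Fin.prod_univ_five, show Finset.Ici (0:Fin 5) = {0,1,2,3,4} from by decide,
    show Finset.Ici (1:Fin 5) = {1,2,3,4} from by decide,
    show Finset.Ici (2:Fin 5) = {2,3,4} from by decide,
    show Finset.Ici (3:Fin 5) = {3,4} from by decide,
    show Finset.Ici (4:Fin 5) = {4} from by decide, h0, h1, h2, h3, h4]
  ring

lemma cop_sub_helper {p N : ℕ} (hp : p.Prime) (hpN : p ∣ N) {a : ℕ} (ha : a ≤ N)
    (hcop : Nat.Coprime a p) : Nat.Coprime (N - a) p := by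
  rw [Nat.coprime_comm, hp.coprime_iff_not_dvd]
  intro hdvd
  have h2 : p ∣ a := by
    have := Nat.dvd_sub hpN hdvd
    rwa [Nat.sub_sub_self ha] at this
  exact hp.one_lt.ne' (Nat.eq_one_of_dvd_coprimes hcop h2 (dvd_refl p))

lemma not_dvd_of_cop {p a : ℕ} (hp : p.Prime) (h : Nat.Coprime a p) : ¬ p ∣ a :=
  (hp.coprime_iff_not_dvd).mp (Nat.coprime_comm.mp h)

theorem harmonic_five_sum_eq_quadruple_sum (p : ℕ) (hp : p.Prime) (hp5 : 5 < p)
    (r m : ℕ) (hr : 0 < r) (hm : 0 < m) :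
    (∑ v ∈ (Finset.Nat.antidiagonalTuple 5 (m * p ^ r)).filter
        (fun v => ∀ i, 0 < v i ∧ Nat.Coprime (v i) p),
      1 / ((v 0 : ℚ) * (v 1 : ℚ) * (v 2 : ℚ) * (v 3 : ℚ) * (v 4 : ℚ))) =
    (120 / ((m : ℚ) * (p : ℚ) ^ r)) *
      ∑ u ∈ (Finset.Icc 1 (m * p ^ r) ×ˢ Finset.Icc 1 (m * p ^ r) ×ˢ
              Finset.Icc 1 (m * p ^ r) ×ˢ Finset.Icc 1 (m * p ^ r)).filter
          (fun u => u.1 < u.2.1 ∧ u.2.1 < u.2.2.1 ∧ u.2.2.1 < u.2.2.2 ∧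
            Nat.Coprime u.1 p ∧ Nat.Coprime u.2.2.2 p ∧
            Nat.Coprime (u.2.1 - u.1) p ∧ Nat.Coprime (u.2.2.1 - u.2.1) p ∧
            Nat.Coprime (u.2.2.2 - u.2.2.1) p),
        1 / ((u.1 : ℚ) * (u.2.1 : ℚ) * (u.2.2.1 : ℚ) * (u.2.2.2 : ℚ)) := by
  set N := m * p ^ r with hNdef
  have hpN : p ∣ N := Dvd.dvd.mul_left (dvd_pow_self p hr.ne') m
  have hNpos : 0 < N := Nat.mul_pos hm (Nat.pow_pos hp.pos)
  have hcast : (N : ℚ) = (m : ℚ) * (p : ℚ) ^ r := by rw [hNdef]; push_cast; ring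
  have stepA : ∑ v ∈ (Finset.Nat.antidiagonalTuple 5 N).filter
        (fun v => ∀ i, 0 < v i ∧ Nat.Coprime (v i) p),
      ∏ k : Fin 5, (∑ j ∈ Finset.Ici k, (v j : ℚ))⁻¹ =
      ∑ u ∈ (Finset.Icc 1 N ×ˢ Finset.Icc 1 N ×ˢ Finset.Icc 1 N ×ˢ Finset.Icc 1 N).filter
          (fun u => u.1 < u.2.1 ∧ u.2.1 < u.2.2.1 ∧ u.2.2.1 < u.2.2.2 ∧
            Nat.Coprime u.1 p ∧ Nat.Coprime u.2.2.2 p ∧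
            Nat.Coprime (u.2.1 - u.1) p ∧ Nat.Coprime (u.2.2.1 - u.2.1) p ∧
            Nat.Coprime (u.2.2.2 - u.2.2.1) p),
        (N : ℚ)⁻¹ * (1 / ((u.1 : ℚ) * (u.2.1 : ℚ) * (u.2.2.1 : ℚ) * (u.2.2.2 : ℚ))) := by
    refine Finset.sum_nbij'
      (fun v => (v 4, v 3 + v 4, v 2 + v 3 + v 4, v 1 + v 2 + v 3 + v 4))
      (fun u => ![N - u.2.2.2, u.2.2.2 - u.2.2.1, u.2.2.1 - u.2.1, u.2.1 - u.1, u.1])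
      ?_ ?_ ?_ ?_ ?_
    · -- hi
      intro v hv
      rw [Finset.mem_filter, Finset.Nat.mem_antidiagonalTuple] at hv
      obtain ⟨hsum, hcond⟩ := hv
      rw [Fin.sum_univ_five] at hsum
      have h0 := hcond 0; have h1 := hcond 1; have h2 := hcond 2
      have h3 := hcond 3; have h4 := hcond 4
      simp only [Finset.mem_filter, Finset.mem_product, Finset.mem_Icc]
      refine ⟨⟨⟨by omega, by omega⟩, ⟨by omega, by omega⟩, ⟨by omega, by omega⟩,
        ⟨by omega, by omega⟩⟩, by omega, by omega, by omega, h4.2, ?_, ?_, ?_, ?_⟩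
      · have e : v 1 + v 2 + v 3 + v 4 = N - v 0 := by omega
        rw [e]
        exact cop_sub_helper hp hpN (by omega) h0.2
      · have e : v 3 + v 4 - v 4 = v 3 := by omega
        rw [e]; exact h3.2
      · have e : v 2 + v 3 + v 4 - (v 3 + v 4) = v 2 := by omega
        rw [e]; exact h2.2
      · have e : v 1 + v 2 + v 3 + v 4 - (v 2 + v 3 + v 4) = v 1 := by omega
        rw [e]; exact h1.2
    · -- hj
      intro u hu
      obtain ⟨u1, u2, u3, u4⟩ := u
      rw [Finset.mem_filter] at hu
      obtain ⟨hmem, h12, h23, h34, c1, c4, d2, d3, d4⟩ := hu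
      simp only [Finset.mem_product, Finset.mem_Icc] at hmem
      obtain ⟨⟨hu1a, hu1b⟩, ⟨hu2a, hu2b⟩, ⟨hu3a, hu3b⟩, hu4a, hu4b⟩ := hmem
      simp only at h12 h23 h34 c1 c4 d2 d3 d4
      have hu4N : u4 < N := by
        rcases Nat.lt_or_ge u4 N with h | h
        · exact h
        · exact absurd ((le_antisymm hu4b h) ▸ hpN) (not_dvd_of_cop hp c4)
      rw [Finset.mem_filter, Finset.Nat.mem_antidiagonalTuple]
      constructor
      · rw [Fin.sum_univ_five]
        show N - u4 + (u4 - u3) + (u3 - u2) + (u2 - u1) + u1 = N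
        omega
      · intro i
        fin_cases i
        · exact ⟨show 0 < N - u4 by omega, cop_sub_helper hp hpN hu4b c4⟩
        · exact ⟨show 0 < u4 - u3 by omega, d4⟩
        · exact ⟨show 0 < u3 - u2 by omega, d3⟩
        · exact ⟨show 0 < u2 - u1 by omega, d2⟩
        · exact ⟨show 0 < u1 by omega, c1⟩
    · -- left inverse
      intro v hv
      rw [Finset.mem_filter, Finset.Nat.mem_antidiagonalTuple] at hv
      obtain ⟨hsum, hcond⟩ := hv
      rw [Fin.sum_univ_five] at hsum
      have h0 := (hcond 0).1; have h1 := (hcond 1).1; have h2 := (hcond 2).1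
      have h3 := (hcond 3).1; have h4 := (hcond 4).1
      funext i
      fin_cases i
      · show N - (v 1 + v 2 + v 3 + v 4) = v 0; omega
      · show v 1 + v 2 + v 3 + v 4 - (v 2 + v 3 + v 4) = v 1; omega
      · show v 2 + v 3 + v 4 - (v 3 + v 4) = v 2; omega
      · show v 3 + v 4 - v 4 = v 3; omega
      · show v 4 = v 4; rfl
    · -- right inverse
      intro u hu
      obtain ⟨u1, u2, u3, u4⟩ := u
      rw [Finset.mem_filter] at hu
      obtain ⟨hmem, h12, h23, h34, c1, c4, d2, d3, d4⟩ := hu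
      simp only [Finset.mem_product, Finset.mem_Icc] at hmem
      obtain ⟨⟨hu1a, hu1b⟩, ⟨hu2a, hu2b⟩, ⟨hu3a, hu3b⟩, hu4a, hu4b⟩ := hmem
      simp only at h12 h23 h34
      have hu4N : u4 < N := by
        rcases Nat.lt_or_ge u4 N with h | h
        · exact h
        · exact absurd ((le_antisymm hu4b h) ▸ hpN) (not_dvd_of_cop hp (by simpa using c4))
      show (u1, u2 - u1 + u1, u3 - u2 + (u2 - u1) + u1, u4 - u3 + (u3 - u2) + (u2 - u1) + u1)
        = (u1, u2, u3, u4)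
      simp only [Prod.mk.injEq]
      exact ⟨trivial, by omega, by omega, by omega⟩
    · -- values
      intro v hv
      rw [Finset.mem_filter, Finset.Nat.mem_antidiagonalTuple] at hv
      obtain ⟨hsum, hcond⟩ := hv
      rw [Fin.sum_univ_five] at hsum
      rw [g_unfold]
      have hc : ((v 0 : ℚ) + (v 1 : ℚ) + (v 2 : ℚ) + (v 3 : ℚ) + (v 4 : ℚ)) = (N : ℚ) := by
        exact_mod_cast congrArg (Nat.cast : ℕ → ℚ) hsum
      have e2 : ((v 3 + v 4 : ℕ) : ℚ) = (v 3 : ℚ) + (v 4 : ℚ) := by push_cast; ring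
      have e3 : ((v 2 + v 3 + v 4 : ℕ) : ℚ) = (v 2 : ℚ) + (v 3 : ℚ) + (v 4 : ℚ) := by
        push_cast; ring
      have e4 : ((v 1 + v 2 + v 3 + v 4 : ℕ) : ℚ)
          = (v 1 : ℚ) + (v 2 : ℚ) + (v 3 : ℚ) + (v 4 : ℚ) := by push_cast; ring
      show _ = (N : ℚ)⁻¹ * (1 / ((v 4 : ℚ) * ((v 3 + v 4 : ℕ) : ℚ) * ((v 2 + v 3 + v 4 : ℕ) : ℚ)
        * ((v 1 + v 2 + v 3 + v 4 : ℕ) : ℚ)))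
      rw [e2, e3, e4, one_div, mul_inv, mul_inv, mul_inv, hc]
      ring
  have step1 : (∑ v ∈ (Finset.Nat.antidiagonalTuple 5 N).filter
        (fun v => ∀ i, 0 < v i ∧ Nat.Coprime (v i) p),
      1 / ((v 0 : ℚ) * (v 1 : ℚ) * (v 2 : ℚ) * (v 3 : ℚ) * (v 4 : ℚ)))
      = ∑ v ∈ (Finset.Nat.antidiagonalTuple 5 N).filter
        (fun v => ∀ i, 0 < v i ∧ Nat.Coprime (v i) p),
        ∑ σ : Equiv.Perm (Fin 5), ∏ k : Fin 5, (∑ j ∈ Finset.Ici k, ((v (σ j) : ℚ)))⁻¹ := by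
    refine Finset.sum_congr rfl fun v hv => ?_
    rw [Finset.mem_filter] at hv
    have hpos : ∀ i, (0:ℚ) < ((v i : ℚ)) := fun i => by exact_mod_cast (hv.2 i).1
    rw [perm_suffix_sum 5 (fun i => ((v i : ℚ))) hpos, Fin.prod_univ_five, one_div,
      mul_inv, mul_inv, mul_inv, mul_inv]
  have step3 : ∀ σ : Equiv.Perm (Fin 5),
      (∑ v ∈ (Finset.Nat.antidiagonalTuple 5 N).filter
        (fun v => ∀ i, 0 < v i ∧ Nat.Coprime (v i) p),
        ∏ k : Fin 5, (∑ j ∈ Finset.Ici k, ((v (σ j) : ℚ)))⁻¹)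
      = ∑ v ∈ (Finset.Nat.antidiagonalTuple 5 N).filter
        (fun v => ∀ i, 0 < v i ∧ Nat.Coprime (v i) p),
        ∏ k : Fin 5, (∑ j ∈ Finset.Ici k, ((v j : ℚ)))⁻¹ := by
    intro σ
    refine Finset.sum_nbij' (fun v => v ∘ σ) (fun v => v ∘ ⇑σ⁻¹) ?_ ?_ ?_ ?_ ?_
    · intro v hv
      rw [Finset.mem_filter, Finset.Nat.mem_antidiagonalTuple] at hv ⊢
      exact ⟨by rw [← hv.1]; exact Equiv.sum_comp σ v, fun i => hv.2 (σ i)⟩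
    · intro v hv
      rw [Finset.mem_filter, Finset.Nat.mem_antidiagonalTuple] at hv ⊢
      exact ⟨by rw [← hv.1]; exact Equiv.sum_comp σ⁻¹ v, fun i => hv.2 (σ⁻¹ i)⟩
    · intro v _; funext i; simp
    · intro v _; funext i; simp
    · intro v _; rfl
  have step4 : (∑ σ : Equiv.Perm (Fin 5),
      ∑ v ∈ (Finset.Nat.antidiagonalTuple 5 N).filter
        (fun v => ∀ i, 0 < v i ∧ Nat.Coprime (v i) p),
        ∏ k : Fin 5, (∑ j ∈ Finset.Ici k, ((v (σ j) : ℚ)))⁻¹)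
      = 120 * ∑ v ∈ (Finset.Nat.antidiagonalTuple 5 N).filter
        (fun v => ∀ i, 0 < v i ∧ Nat.Coprime (v i) p),
        ∏ k : Fin 5, (∑ j ∈ Finset.Ici k, ((v j : ℚ)))⁻¹ := by
    rw [Finset.sum_congr rfl (fun σ _ => step3 σ), Finset.sum_const, Finset.card_univ,
      Fintype.card_perm, Fintype.card_fin]
    norm_num [Nat.factorial]
  rw [step1, Finset.sum_comm, step4, stepA, ← Finset.mul_sum, hcast]
  ring
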